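/- The size of any set of mutually weakly unbiased Hadamard matrices of order n is at most 2. -/

import Mathlib

open Matrix

/-- A Hadamard matrix with integer entries: entries `±1` and `H * Hᵀ = n • 1`. -/
def IsHadamardMatrixZ {n : ℕ} (H : Matrix (Fin n) (Fin n) ℤ) : Prop :=
  (∀ i j, H i j = 1 ∨ H i j = -1) ∧ H * Hᵀ = (n : ℤ) • 1

/-- Two Hadamard matrices are weakly unbiased: every entry of `H * Kᵀ` is 2 mod 4
and the entries of `H * Kᵀ` take at most two distinct absolute values. -/
def WeaklyUnbiased {n : ℕ} (H K : Matrix (Fin n) (Fin n) ℤ) : Prop :=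
  IsHadamardMatrixZ H ∧ IsHadamardMatrixZ K ∧
    (∀ i j, (H * Kᵀ) i j ≡ 2 [ZMOD 4]) ∧
    ∃ a b : ℤ, ∀ i j, |(H * Kᵀ) i j| = a ∨ |(H * Kᵀ) i j| = b

/-- Over a field-embeddable situation, `K * Kᵀ = n•1` implies `Kᵀ * K = n•1`. -/
lemma aux_transpose_mul_self {n : ℕ} (hn : 0 < n) (K : Matrix (Fin n) (Fin n) ℤ)
    (h : K * Kᵀ = (n : ℤ) • 1) : Kᵀ * K = (n : ℤ) • 1 := by
  have h0 : (n : ℚ) ≠ 0 := by positivity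
  set K' : Matrix (Fin n) (Fin n) ℚ := K.map (Int.cast) with hK'def
  have hmap : K' * K'ᵀ = (n : ℚ) • 1 := by
    ext i j
    have hh := congrFun (congrFun h i) j
    simp only [Matrix.mul_apply, Matrix.transpose_apply, Matrix.smul_apply,
      Matrix.one_apply, hK'def, Matrix.map_apply] at hh ⊢
    by_cases hij : i = j <;> · simp [hij] at hh ⊢; exact_mod_cast hh
  have h1 : K' * ((n : ℚ)⁻¹ • K'ᵀ) = 1 := by
    rw [Matrix.mul_smul, hmap, smul_smul, inv_mul_cancel₀ h0, one_smul]
  have h2 : ((n : ℚ)⁻¹ • K'ᵀ) * K' = 1 := mul_eq_one_comm.mp h1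
  have h3 : K'ᵀ * K' = (n : ℚ) • 1 := by
    have := congrArg (fun M => (n : ℚ) • M) h2
    simpa [Matrix.smul_mul, smul_smul, mul_inv_cancel₀ h0] using this
  ext i j
  have hh := congrFun (congrFun h3 i) j
  simp only [Matrix.mul_apply, Matrix.transpose_apply, Matrix.smul_apply,
    Matrix.one_apply, hK'def, Matrix.map_apply] at hh ⊢
  by_cases hij : i = j <;> · simp [hij] at hh ⊢; exact_mod_cast hh

/-- A weakly unbiased pair forces `4 ∣ n`. -/
lemma aux_four_dvd {n : ℕ} (hn : 0 < n) {Hm Km : Matrix (Fin n) (Fin n) ℤ}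
    (hw : WeaklyUnbiased Hm Km) : (4 : ℤ) ∣ (n : ℤ) := by
  obtain ⟨⟨hH1, hH2⟩, ⟨hK1, hK2⟩, hmod, -⟩ := hw
  set A := Hm * Kmᵀ with hAdef
  set z : Fin n := ⟨0, hn⟩
  -- A * Aᵀ = n² • 1
  have hKtK : Kmᵀ * Km = (n : ℤ) • 1 := aux_transpose_mul_self hn Km hK2
  have hAA : A * Aᵀ = ((n : ℤ) * n) • 1 := by
    rw [hAdef, Matrix.transpose_mul, Matrix.transpose_transpose, Matrix.mul_assoc,
      ← Matrix.mul_assoc Kmᵀ, hKtK, Matrix.smul_mul, Matrix.one_mul,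
      Matrix.mul_smul, hH2, smul_smul]
  -- entrywise at (z,z):
  have hsum : ∑ j, A z j * A z j = (n : ℤ) * n := by
    have := congrFun (congrFun hAA z) z
    simpa [Matrix.mul_apply, Matrix.transpose_apply] using this
  -- each entry is 2 + 4c
  have hc : ∀ j, ∃ c : ℤ, A z j = 2 + 4 * c := by
    intro j
    have := (Int.modEq_iff_dvd.mp (hmod z j))
    obtain ⟨c, hc⟩ := this
    exact ⟨-c, by omega⟩
  choose c hcspec using hc
  have hsum2 : ∑ j, A z j * A z j = 4 * (n : ℤ) + 16 * ∑ j, (c j + c j * c j) := by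
    have : ∀ j ∈ Finset.univ, A z j * A z j = 4 + 16 * (c j + c j * c j) := by
      intro j _; rw [hcspec j]; ring
    rw [Finset.sum_congr rfl this, Finset.sum_add_distrib, Finset.sum_const,
      ← Finset.mul_sum]
    simp [mul_comm]
  -- parity: A z z ≡ n mod 2
  have hpar : (2 : ℤ) ∣ A z z - (n : ℤ) := by
    have : A z z - (n : ℤ) = ∑ k, (Hm z k * Km z k - 1) := by
      rw [Finset.sum_sub_distrib, Finset.sum_const]
      simp [hAdef, Matrix.mul_apply, Matrix.transpose_apply]
    rw [this]
    refine Finset.dvd_sum fun k _ => ?_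
    rcases hH1 z k with h1 | h1 <;> rcases hK1 z k with h2 | h2 <;>
      simp [h1, h2]
  -- arithmetic
  set N : ℤ := (n : ℤ) with hN
  have heq : N * N = 4 * N + 16 * ∑ j, (c j + c j * c j) := by
    rw [← hsum2, hsum]
  set C : ℤ := ∑ j, (c j + c j * c j)
  have hAzz := hcspec z
  have hNeven : (2 : ℤ) ∣ N := by
    rw [hAzz] at hpar; omega
  obtain ⟨t, ht⟩ := hNeven
  have ht2 : t * t = 2 * t + 4 * C := by nlinarith [heq, ht]
  rcases Int.even_or_odd t with ⟨s, hs⟩ | ⟨s, hs⟩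
  · exact ⟨s, by omega⟩
  · exfalso
    have : (2 * s + 1) * (2 * s + 1) = 2 * (2 * s + 1) + 4 * C := by
      rw [← hs]; exact ht2
    have h4 : 4 * (s * s) + 4 * s + 1 = 4 * s + 2 + 4 * C := by ring_nf; ring_nf at this; linarith
    omega

/-- Row-sum congruence: for a weakly unbiased pair,
`4 ∣ (row sum of H at 0) + (row sum of K at 0) - n - 2`. -/
lemma aux_rowsum {n : ℕ} (hn : 0 < n) {Hm Km : Matrix (Fin n) (Fin n) ℤ}
    (hw : WeaklyUnbiased Hm Km) :
    (4 : ℤ) ∣ (∑ k, Hm ⟨0, hn⟩ k) + (∑ k, Km ⟨0, hn⟩ k) - (n : ℤ) - 2 := by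
  obtain ⟨⟨hH1, -⟩, ⟨hK1, -⟩, hmod, -⟩ := hw
  set z : Fin n := ⟨0, hn⟩
  have hA2 : (4 : ℤ) ∣ (Hm * Kmᵀ) z z - 2 := by
    obtain ⟨c, hc⟩ := Int.modEq_iff_dvd.mp (hmod z z)
    exact ⟨-c, by omega⟩
  have hkey : (4 : ℤ) ∣ (Hm * Kmᵀ) z z - ((∑ k, Hm z k) + (∑ k, Km z k) - (n : ℤ)) := by
    have heq : (Hm * Kmᵀ) z z - ((∑ k, Hm z k) + (∑ k, Km z k) - (n : ℤ)) =
        ∑ k, (Hm z k - 1) * (Km z k - 1) := by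
      have : ∀ k ∈ Finset.univ, (Hm z k - 1) * (Km z k - 1) =
          Hm z k * Km z k - Hm z k - Km z k + 1 := fun k _ => by ring
      rw [Finset.sum_congr rfl this]
      simp only [Finset.sum_add_distrib, Finset.sum_sub_distrib, Finset.sum_const,
        Matrix.mul_apply, Matrix.transpose_apply]
      simp
      ring
    rw [heq]
    refine Finset.dvd_sum fun k _ => ?_
    rcases hH1 z k with h1 | h1 <;> rcases hK1 z k with h2 | h2 <;>
      simp [h1, h2]
  obtain ⟨a, ha⟩ := hA2
  obtain ⟨b, hb⟩ := hkey
  exact ⟨a - b, by omega⟩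

theorem stmt_14 (n f : ℕ) (H : Fin f → Matrix (Fin n) (Fin n) ℤ)
    (hinj : Function.Injective H)
    (h : ∀ i j, i ≠ j → WeaklyUnbiased (H i) (H j)) : f ≤ 2 := by
  by_contra hf
  push_neg at hf
  have h3 : 3 ≤ f := hf
  set i0 : Fin f := ⟨0, by omega⟩
  set i1 : Fin f := ⟨1, by omega⟩
  set i2 : Fin f := ⟨2, by omega⟩
  have h01 : i0 ≠ i1 := by simp [i0, i1, Fin.ext_iff]
  have h02 : i0 ≠ i2 := by simp [i0, i2, Fin.ext_iff]
  have h12 : i1 ≠ i2 := by simp [i1, i2, Fin.ext_iff]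
  rcases Nat.eq_zero_or_pos n with hn | hn
  · subst hn
    exact h01 (hinj (by ext i j; exact i.elim0))
  · -- n ≥ 1
    have hw01 := h i0 i1 h01
    have hw02 := h i0 i2 h02
    have hw12 := h i1 i2 h12
    have hdvd : (4 : ℤ) ∣ (n : ℤ) := aux_four_dvd hn hw01
    set u : ℤ := ∑ k, (H i0) ⟨0, hn⟩ k
    set v : ℤ := ∑ k, (H i1) ⟨0, hn⟩ k
    set w : ℤ := ∑ k, (H i2) ⟨0, hn⟩ k
    have e01 : (4 : ℤ) ∣ u + v - (n : ℤ) - 2 := aux_rowsum hn hw01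
    have e02 : (4 : ℤ) ∣ u + w - (n : ℤ) - 2 := aux_rowsum hn hw02
    have e12 : (4 : ℤ) ∣ v + w - (n : ℤ) - 2 := aux_rowsum hn hw12
    -- parity of u : u ≡ n mod 2
    obtain ⟨⟨hH1, -⟩, -, -, -⟩ := hw01
    have hupar : (2 : ℤ) ∣ u - (n : ℤ) := by
      have : u - (n : ℤ) = ∑ k, ((H i0) ⟨0, hn⟩ k - 1) := by
        rw [Finset.sum_sub_distrib, Finset.sum_const]; simp [u]
      rw [this]
      refine Finset.dvd_sum fun k _ => ?_
      rcases hH1 ⟨0, hn⟩ k with h1 | h1 <;> simp [h1]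
    omega
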